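/- Let V : [r₀, ∞) → ℝ be a nonnegative, differentiable, nondecreasing function and let χ : [r₀, ∞) → ℝ be differentiable and nondecreasing with 0 ≤ χ(r) ≤ δ V(r) for all r, where 0 ≤ δ < n/2. Suppose for all r ≥ r₀ > 0 and some constant c ≥ 0: n V(r) − 2χ(r) = ((r² + 4c)/r) V'(r) − (4/r) χ'(r). Then for all r ≥ r₀, V(r) ≥ (V(r₀)/(r₀² + 4c)^{n/2−δ}) (r² + 4c)^{n/2−δ}. -/

import Mathlib

open Set

/-- Analytic core of Lemma 1.3: if `V, χ` are differentiable on `[r₀, ∞)`,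
`V ≥ 0` nondecreasing, `χ` nondecreasing with `0 ≤ χ ≤ δ V` where
`0 ≤ δ < n/2`, `c ≥ 0`, `r₀ > 0`, and the identity
`n V(r) − 2χ(r) = ((r²+4c)/r) V'(r) − (4/r) χ'(r)` holds for `r ≥ r₀`, then
`V(r) ≥ (V(r₀)/(r₀²+4c)^{n/2−δ}) (r²+4c)^{n/2−δ}` for all `r ≥ r₀`. -/
theorem volume_lower_bound (n δ c r₀ : ℝ) (V χ V' χ' : ℝ → ℝ)
    (hr₀ : 0 < r₀) (hc : 0 ≤ c) (hδ0 : 0 ≤ δ) (hδ : δ < n / 2)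
    (hVderiv : ∀ r ∈ Ici r₀, HasDerivAt V (V' r) r)
    (hχderiv : ∀ r ∈ Ici r₀, HasDerivAt χ (χ' r) r)
    (hVnonneg : ∀ r ∈ Ici r₀, 0 ≤ V r)
    (hVmono : MonotoneOn V (Ici r₀))
    (hχmono : MonotoneOn χ (Ici r₀))
    (hχbound : ∀ r ∈ Ici r₀, 0 ≤ χ r ∧ χ r ≤ δ * V r)
    (hid : ∀ r ∈ Ici r₀,
      n * V r - 2 * χ r = ((r ^ 2 + 4 * c) / r) * V' r - (4 / r) * χ' r) :
    ∀ r ∈ Ici r₀,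
      V r ≥ (V r₀ / (r₀ ^ 2 + 4 * c) ^ (n / 2 - δ))
        * (r ^ 2 + 4 * c) ^ (n / 2 - δ) := by
  set α : ℝ := n / 2 - δ with hα
  have hαpos : 0 < α := by simp only [hα]; linarith
  have hrpos : ∀ r ∈ Ici r₀, (0:ℝ) < r := fun r hr => lt_of_lt_of_le hr₀ hr
  have hu : ∀ r ∈ Ici r₀, (0:ℝ) < r ^ 2 + 4 * c := fun r hr => by
    have := hrpos r hr; nlinarith
  -- χ' is nonnegative on Ici r₀
  have hχ' : ∀ r ∈ Ici r₀, 0 ≤ χ' r := by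
    intro r hr
    have h := ((hχderiv r hr).hasDerivWithinAt (s := Ioi r))
    rw [hasDerivWithinAt_iff_tendsto_slope] at h
    have hs : Ioi r \ {r} = Ioi r :=
      Set.diff_singleton_eq_self (by simp)
    rw [hs] at h
    refine ge_of_tendsto h ?_
    filter_upwards [self_mem_nhdsWithin] with y hy
    have hy' : r < y := hy
    have hyI : y ∈ Ici r₀ := le_trans hr hy'.le
    have : χ r ≤ χ y := hχmono hr hyI hy'.le
    rw [slope_def_field]
    exact div_nonneg (by linarith) (by linarith)
  -- Key differential inequality: (r²+4c) V' ≥ 2αr V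
  have key : ∀ r ∈ Ici r₀, 2 * α * r * V r ≤ (r ^ 2 + 4 * c) * V' r := by
    intro r hr
    have hr' := hrpos r hr
    have hid' := hid r hr
    have h1 : (r ^ 2 + 4 * c) * V' r = r * (n * V r - 2 * χ r) + 4 * χ' r := by
      field_simp at hid'
      linarith
    obtain ⟨hχ0, hχδ⟩ := hχbound r hr
    have hχ'r := hχ' r hr
    have hVr := hVnonneg r hr
    have : n * V r - 2 * χ r ≥ 2 * α * V r := by
      simp only [hα]; nlinarith
    nlinarith [mul_le_mul_of_nonneg_left this hr'.le]
  -- The comparison function F r = V r * (r²+4c)^(-α)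
  set F : ℝ → ℝ := fun r => V r * (r ^ 2 + 4 * c) ^ (-α) with hF
  set F' : ℝ → ℝ := fun r =>
    V' r * (r ^ 2 + 4 * c) ^ (-α)
      + V r * ((2 * r ^ 1) * (-α) * (r ^ 2 + 4 * c) ^ (-α - 1)) with hF'
  have hFd : ∀ r ∈ Ici r₀, HasDerivAt F (F' r) r := by
    intro r hr
    have hq : HasDerivAt (fun r : ℝ => r ^ 2 + 4 * c) ((2:ℕ) * r ^ 1) r := by
      simpa using (hasDerivAt_pow 2 r).add_const (4 * c)
    have hg : HasDerivAt (fun r : ℝ => (r ^ 2 + 4 * c) ^ (-α))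
        ((2:ℕ) * r ^ 1 * (-α) * (r ^ 2 + 4 * c) ^ (-α - 1)) r :=
      hq.rpow_const (Or.inl (hu r hr).ne')
    have := (hVderiv r hr).mul hg
    simpa [hF, hF', Pi.mul_def] using this
  have hF'nonneg : ∀ r ∈ Ici r₀, 0 ≤ F' r := by
    intro r hr
    have hur := hu r hr
    have hsplit : (r ^ 2 + 4 * c) ^ (-α)
        = (r ^ 2 + 4 * c) ^ (-α - 1) * (r ^ 2 + 4 * c) := by
      rw [show -α = -α - 1 + 1 by ring, Real.rpow_add hur, Real.rpow_one]
      ring_nf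
    have hpow : (0:ℝ) ≤ (r ^ 2 + 4 * c) ^ (-α - 1) := Real.rpow_nonneg hur.le _
    have hk := key r hr
    have : F' r = (r ^ 2 + 4 * c) ^ (-α - 1)
        * ((r ^ 2 + 4 * c) * V' r - 2 * α * r * V r) := by
      simp only [hF', hsplit]; ring
    rw [this]
    exact mul_nonneg hpow (by linarith)
  have hFmono : MonotoneOn F (Ici r₀) := by
    refine monotoneOn_of_hasDerivWithinAt_nonneg (f' := F') (convex_Ici r₀)
      (fun r hr => (hFd r hr).continuousAt.continuousWithinAt)
      (fun r hr => ?_) (fun r hr => ?_)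
    · rw [interior_Ici] at hr
      exact (hFd r (mem_Ici.mpr (le_of_lt hr))).hasDerivWithinAt
    · rw [interior_Ici] at hr
      exact hF'nonneg r (mem_Ici.mpr (le_of_lt hr))
  intro r hr
  have hmono := hFmono (self_mem_Ici) hr hr
  have hur := hu r hr
  have hu0 := hu r₀ (self_mem_Ici)
  have hupow : (0:ℝ) < (r ^ 2 + 4 * c) ^ α := Real.rpow_pos_of_pos hur α
  have h0 : F r₀ = V r₀ / (r₀ ^ 2 + 4 * c) ^ α := by
    simp only [hF]
    rw [Real.rpow_neg hu0.le, div_eq_mul_inv]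
  have h1 : F r = V r / (r ^ 2 + 4 * c) ^ α := by
    simp only [hF]
    rw [Real.rpow_neg hur.le, div_eq_mul_inv]
  rw [h0, h1] at hmono
  rw [ge_iff_le]
  calc V r₀ / (r₀ ^ 2 + 4 * c) ^ α * (r ^ 2 + 4 * c) ^ α
      ≤ V r / (r ^ 2 + 4 * c) ^ α * (r ^ 2 + 4 * c) ^ α := by
        exact mul_le_mul_of_nonneg_right hmono hupow.le
    _ = V r := by field_simp
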